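/- Let N ≥ 3, 0 < m < 1, σ > 0, p_c(σ) < p < p_L(σ), and let K = [ m(σ+2)(N-2)(p - p_c(σ)) / (p-m)^2 ]^{1/(p-m)}. Then u(x) = K |x|^{-(σ+2)/(p-m)} is a stationary solution of ∂_t u = Δ u^m + |x|^σ u^p on ℝ^N \ {0}, i.e. Δ(u^m)(x) + |x|^σ u(x)^p = 0 for x ≠ 0. -/
import Mathlib

theorem stationary_singular_solution (N : ℕ) (hN : 3 ≤ N) (m σ p K : ℝ)
    (hm0 : 0 < m) (hm1 : m < 1) (hσ : 0 < σ)
    (hpc : m * ((N : ℝ) + σ) / ((N : ℝ) - 2) < p) (hpL : p < 1 + σ * (1 - m) / 2)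
    (hK : K = (m * (σ + 2) * ((N : ℝ) - 2) * (p - m * ((N : ℝ) + σ) / ((N : ℝ) - 2)) /
        (p - m) ^ 2) ^ (1 / (p - m)))
    (u : ℝ → ℝ) (hu : ∀ r : ℝ, u r = K * r ^ (-(σ + 2) / (p - m))) :
    ∀ r : ℝ, 0 < r →
      deriv (deriv (fun s => u s ^ m)) r + ((N : ℝ) - 1) / r * deriv (fun s => u s ^ m) r
        + r ^ σ * u r ^ p = 0 := by
  have hN2 : (2:ℝ) < (N:ℝ) := by
    have : (3:ℝ) ≤ (N:ℝ) := by exact_mod_cast hN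
    linarith
  have hN2' : (0:ℝ) < (N:ℝ) - 2 := by linarith
  have hpm : m < p := by
    have h1 : m < m * ((N:ℝ) + σ) / ((N:ℝ) - 2) := by
      rw [lt_div_iff₀ hN2']; nlinarith
    linarith
  have hpm0 : p - m ≠ 0 := sub_ne_zero.mpr hpm.ne'
  set A : ℝ := m * (σ + 2) * ((N : ℝ) - 2) * (p - m * ((N : ℝ) + σ) / ((N : ℝ) - 2)) /
        (p - m) ^ 2 with hA
  have hApos : 0 < A := by
    have h1 : 0 < p - m * ((N:ℝ) + σ) / ((N:ℝ) - 2) := by linarith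
    have h2 : 0 < m * (σ + 2) * ((N:ℝ) - 2) * (p - m * ((N:ℝ) + σ) / ((N:ℝ) - 2)) :=
      mul_pos (mul_pos (mul_pos hm0 (by linarith)) hN2') h1
    exact div_pos h2 (by positivity)
  have hK0 : 0 < K := by rw [hK]; exact Real.rpow_pos_of_pos hApos _
  have hKpm : K ^ (p - m) = A := by
    rw [hK, ← Real.rpow_mul hApos.le, one_div, inv_mul_cancel₀ hpm0, Real.rpow_one]
  set α : ℝ := -(σ + 2) / (p - m) with hα
  set β : ℝ := α * m with hβ
  set C : ℝ := K ^ m with hC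
  -- first derivative at any positive point
  have hd1 : ∀ s : ℝ, 0 < s → HasDerivAt (fun t => u t ^ m) (C * β * s ^ (β - 1)) s := by
    intro s hs
    have hev : (fun t => u t ^ m) =ᶠ[nhds s] fun t => C * t ^ β := by
      filter_upwards [eventually_gt_nhds hs] with t ht
      rw [hu t, Real.mul_rpow hK0.le (Real.rpow_nonneg ht.le _), ← Real.rpow_mul ht.le]
    have H : HasDerivAt (fun t => C * t ^ β) (C * β * s ^ (β - 1)) s := by
      have := (Real.hasDerivAt_rpow_const (p := β) (Or.inl hs.ne')).const_mul C
      simpa [mul_assoc] using this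
    exact H.congr_of_eventuallyEq hev
  intro r hr
  have hderiv1 : ∀ s : ℝ, 0 < s → deriv (fun t => u t ^ m) s = C * β * s ^ (β - 1) :=
    fun s hs => (hd1 s hs).deriv
  have hev2 : deriv (fun t => u t ^ m) =ᶠ[nhds r] fun s => C * β * s ^ (β - 1) := by
    filter_upwards [eventually_gt_nhds hr] with s hs using hderiv1 s hs
  have hderiv2 : deriv (deriv (fun t => u t ^ m)) r = C * β * (β - 1) * r ^ (β - 2) := by
    rw [hev2.deriv_eq]
    have := (Real.hasDerivAt_rpow_const (p := β - 1) (Or.inl hr.ne')).const_mul (C * β)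
    have h := this.deriv
    rw [h]; ring_nf
  rw [hderiv2, hderiv1 r hr, hu r]
  have hup : (K * r ^ α) ^ p = K ^ p * r ^ (α * p) := by
    rw [Real.mul_rpow hK0.le (Real.rpow_nonneg hr.le _), ← Real.rpow_mul hr.le]
  rw [hup]
  have hX1 : r ^ (β - 1) = r * r ^ (β - 2) := by
    rw [show β - 1 = 1 + (β - 2) by ring, Real.rpow_add hr, Real.rpow_one]
  have hX2 : r ^ σ * r ^ (α * p) = r ^ (β - 2) := by
    rw [← Real.rpow_add hr]
    congr 1
    rw [hβ, hα]
    field_simp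
    ring
  have hKp : K ^ p = C * A := by
    rw [hC, ← hKpm, ← Real.rpow_add hK0]
    congr 1; ring
  have hinner : β * (β - 1) + β * ((N:ℝ) - 1) + A = 0 := by
    rw [hβ, hα, hA]
    field_simp
    ring
  rw [hX1, hKp]
  have hr0 : r ≠ 0 := hr.ne'
  have : C * β * (β - 1) * r ^ (β - 2) + ((N:ℝ) - 1) / r * (C * β * (r * r ^ (β - 2)))
      + r ^ σ * (C * A * r ^ (α * p))
      = (C * (β * (β - 1) + β * ((N:ℝ) - 1) + A)) * r ^ (β - 2)
        + C * A * (r ^ σ * r ^ (α * p) - r ^ (β - 2)) := by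
    field_simp
    ring
  rw [this, hX2, hinner]
  ring
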